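/- Let n be a finite nonempty index type and Q an n×n real matrix with nonnegative off-diagonal entries and all row sums equal to zero (a CTMC generator matrix). Then for every real t ≥ 0, the matrix exp(t • Q) is a (row-)stochastic matrix: all its entries are nonnegative and every row sums to one. Consequently, if v : n → ℝ is a probability vector (entrywise nonnegative with ∑_i v i = 1), then the transient distribution vᵀ · exp(t • Q) is again a probability vector for every t ≥ 0. -/

import Mathlib

open NormedSpace Matrix

private lemma hasSum_linear_exp {n : Type*} [Fintype n] [DecidableEq n] (A : Matrix n n ℝ)
    (f : Matrix n n ℝ →ₗ[ℝ] ℝ) (hf : Continuous f) :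
    HasSum (fun k : ℕ => (k.factorial : ℝ)⁻¹ * f (A ^ k)) (f (NormedSpace.exp A)) := by
  letI : SeminormedRing (Matrix n n ℝ) := Matrix.linftyOpSemiNormedRing
  letI : NormedRing (Matrix n n ℝ) := Matrix.linftyOpNormedRing
  letI : NormedAlgebra ℝ (Matrix n n ℝ) := Matrix.linftyOpNormedAlgebra
  have h := NormedSpace.exp_series_hasSum_exp' (𝕂 := ℝ) A
  have h2 := h.map f.toAddMonoidHom hf
  convert h2 using 1
  funext k
  simp [Function.comp, smul_eq_mul]
  rfl

private lemma exp_smul_one_matrix {n : Type*} [Fintype n] [DecidableEq n] (r : ℝ) :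
    NormedSpace.exp (r • (1 : Matrix n n ℝ)) = Real.exp r • (1 : Matrix n n ℝ) := by
  letI : SeminormedRing (Matrix n n ℝ) := Matrix.linftyOpSemiNormedRing
  letI : NormedRing (Matrix n n ℝ) := Matrix.linftyOpNormedRing
  letI : NormedAlgebra ℝ (Matrix n n ℝ) := Matrix.linftyOpNormedAlgebra
  have h1 : r • (1 : Matrix n n ℝ) = algebraMap ℝ (Matrix n n ℝ) r := by
    simp [Algebra.algebraMap_eq_smul_one]
  have h2 : Real.exp r • (1 : Matrix n n ℝ) = algebraMap ℝ (Matrix n n ℝ) (Real.exp r) := by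
    simp [Algebra.algebraMap_eq_smul_one]
  rw [h1, h2, Real.exp_eq_exp_ℝ]
  exact (NormedSpace.algebraMap_exp_comm r).symm

private lemma exp_entries_nonneg {n : Type*} [Fintype n] [DecidableEq n] (A : Matrix n n ℝ)
    (hA : ∀ i j, 0 ≤ A i j) (i j : n) : 0 ≤ (NormedSpace.exp A) i j := by
  have hpow : ∀ k : ℕ, ∀ i j, 0 ≤ (A ^ k) i j := by
    intro k
    induction k with
    | zero => intro i j; by_cases h : i = j <;> simp [pow_zero, Matrix.one_apply, h]
    | succ k ih =>
      intro i j
      rw [pow_succ, Matrix.mul_apply]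
      exact Finset.sum_nonneg fun l _ => mul_nonneg (ih i l) (hA l j)
  let f : Matrix n n ℝ →ₗ[ℝ] ℝ :=
    { toFun := fun M => M i j, map_add' := fun _ _ => rfl, map_smul' := fun _ _ => rfl }
  have hf : Continuous f := continuous_id.matrix_elem i j
  have h := hasSum_linear_exp A f hf
  exact h.nonneg fun k => mul_nonneg (by positivity) (hpow k i j)

private lemma exp_rowsum_one {n : Type*} [Fintype n] [DecidableEq n] (A : Matrix n n ℝ)
    (hrow : ∀ i, ∑ j, A i j = 0) (i : n) : ∑ j, (NormedSpace.exp A) i j = 1 := by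
  have hpow : ∀ k : ℕ, ∀ i, ∑ j, (A ^ (k + 1)) i j = 0 := by
    intro k
    induction k with
    | zero => simpa using hrow
    | succ k ih =>
      intro i
      have : A ^ (k + 2) = A * A ^ (k + 1) := by rw [pow_succ'] 
      rw [this]
      simp only [Matrix.mul_apply]
      rw [Finset.sum_comm]
      calc ∑ l, ∑ j, A i l * (A ^ (k+1)) l j
          = ∑ l, A i l * ∑ j, (A ^ (k+1)) l j := by simp [Finset.mul_sum]
        _ = 0 := by simp [ih]
  let f : Matrix n n ℝ →ₗ[ℝ] ℝ :=
    { toFun := fun M => ∑ j, M i j,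
      map_add' := fun _ _ => by simp [Finset.sum_add_distrib]
      map_smul' := fun _ _ => by simp [Finset.mul_sum] }
  have hf : Continuous f := by
    apply continuous_finset_sum
    intro j _
    exact continuous_id.matrix_elem i j
  have h := hasSum_linear_exp A f hf
  have h0 : HasSum (fun k : ℕ => (k.factorial : ℝ)⁻¹ * f (A ^ k)) 1 := by
    have h1 : f (1 : Matrix n n ℝ) = 1 := by simp [f, Matrix.one_apply]
    have := hasSum_single (f := fun k : ℕ => (k.factorial : ℝ)⁻¹ * f (A ^ k)) 0
      (fun k hk => by
        obtain ⟨m, rfl⟩ := Nat.exists_eq_succ_of_ne_zero hk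
        simp only [f, LinearMap.coe_mk, AddHom.coe_mk]
        rw [hpow m i, mul_zero])
    simpa [h1] using this
  exact h.unique h0

/-- For a CTMC generator matrix `Q` (nonnegative off-diagonal entries, zero row sums) and
`t ≥ 0`, the matrix `exp (t • Q)` is row-stochastic, and consequently it maps every initial
probability vector `v` to a probability vector `vᵀ · exp (t • Q)`. -/
theorem exp_generator_stochastic {n : Type*} [Fintype n] [Nonempty n] [DecidableEq n]
    (Q : Matrix n n ℝ) (hoff : ∀ i j, i ≠ j → 0 ≤ Q i j) (hrow : ∀ i, ∑ j, Q i j = 0)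
    (t : ℝ) (ht : 0 ≤ t) :
    (∀ i j, 0 ≤ (NormedSpace.exp (t • Q)) i j) ∧
    (∀ i, ∑ j, (NormedSpace.exp (t • Q)) i j = 1) ∧
    ∀ v : n → ℝ, (∀ i, 0 ≤ v i) → ∑ i, v i = 1 →
      (∀ j, 0 ≤ Matrix.vecMul v (NormedSpace.exp (t • Q)) j) ∧
      ∑ j, Matrix.vecMul v (NormedSpace.exp (t • Q)) j = 1 := by
  -- diagonal entries are nonpositive
  have hdiag : ∀ i, Q i i ≤ 0 := by
    intro i
    have h1 : Q i i + ∑ j ∈ Finset.univ.erase i, Q i j = 0 := by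
      rw [Finset.add_sum_erase _ _ (Finset.mem_univ i)]
      exact hrow i
    have h2 : 0 ≤ ∑ j ∈ Finset.univ.erase i, Q i j :=
      Finset.sum_nonneg fun j hj => hoff i j (Ne.symm (Finset.ne_of_mem_erase hj))
    linarith
  set c : ℝ := ∑ i, (-Q i i) with hc
  have hcnn : 0 ≤ c := Finset.sum_nonneg fun i _ => by linarith [hdiag i]
  have hcle : ∀ i, -Q i i ≤ c := fun i =>
    Finset.single_le_sum (f := fun j => -Q j j) (fun j _ => neg_nonneg.2 (hdiag j))
      (Finset.mem_univ i)
  -- the shifted matrix has nonnegative entries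
  set A : Matrix n n ℝ := t • Q + (t * c) • (1 : Matrix n n ℝ) with hA
  have hAnn : ∀ i j, 0 ≤ A i j := by
    intro i j
    by_cases h : i = j
    · subst h
      simp only [hA, Matrix.add_apply, Matrix.smul_apply, Matrix.one_apply_eq, smul_eq_mul,
        mul_one]
      have := hcle i
      nlinarith
    · simp only [hA, Matrix.add_apply, Matrix.smul_apply, Matrix.one_apply_ne h, smul_eq_mul,
        mul_zero, add_zero]
      exact mul_nonneg ht (hoff i j h)
  -- decomposition of exp (t • Q)
  have hsplit : t • Q = A + (-(t * c)) • (1 : Matrix n n ℝ) := by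
    rw [hA]; abel_nf; simp [neg_smul]
  have hcomm : Commute A ((-(t * c)) • (1 : Matrix n n ℝ)) :=
    (Commute.one_right A).smul_right _
  have hexp : NormedSpace.exp (t • Q) = Real.exp (-(t * c)) • NormedSpace.exp A := by
    rw [hsplit, Matrix.exp_add_of_commute A _ hcomm, exp_smul_one_matrix, mul_smul_comm,
      mul_one]
  -- entry nonnegativity
  have hnonneg : ∀ i j, 0 ≤ (NormedSpace.exp (t • Q)) i j := by
    intro i j
    rw [hexp]
    exact mul_nonneg (Real.exp_nonneg _) (exp_entries_nonneg A hAnn i j)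
  -- row sums
  have hrowsum : ∀ i, ∑ j, (NormedSpace.exp (t • Q)) i j = 1 := by
    intro i
    apply exp_rowsum_one
    intro l
    simp [Matrix.smul_apply, ← Finset.mul_sum, hrow l]
  refine ⟨hnonneg, hrowsum, ?_⟩
  intro v hv hv1
  constructor
  · intro j
    rw [Matrix.vecMul, dotProduct]
    exact Finset.sum_nonneg fun i _ => mul_nonneg (hv i) (hnonneg i j)
  · simp only [Matrix.vecMul, dotProduct]
    rw [Finset.sum_comm]
    calc ∑ i, ∑ j, v i * (NormedSpace.exp (t • Q)) i j
        = ∑ i, v i * ∑ j, (NormedSpace.exp (t • Q)) i j := by simp [Finset.mul_sum]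
      _ = 1 := by simp [hrowsum, hv1]
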